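/- The generalized quaternion group Q_{2^λ} has exactly 2^{λ−1} + λ − 1 subgroups, for λ ≥ 3. -/

import Mathlib

open QuaternionGroup AddSubgroup

namespace QuatCount

/-- Key membership lemma for `zmultiples` of a divisor in `ZMod N`. -/
lemma mem_zmultiples_natCast_iff {N d : ℕ} [NeZero N] (hd : d ∣ N) (x : ZMod N) :
    x ∈ AddSubgroup.zmultiples ((d : ℕ) : ZMod N) ↔ d ∣ x.val := by
  constructor
  · rintro ⟨k, rfl⟩
    have h1 : ((((k • ((d : ℕ) : ZMod N)).val : ℕ) : ℤ) : ZMod N) = ((k * d : ℤ) : ZMod N) := by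
      push_cast [ZMod.natCast_zmod_val]
      rw [zsmul_eq_mul]
    rw [ZMod.intCast_eq_intCast_iff] at h1
    have h2 : (N : ℤ) ∣ k * d - ((k • ((d : ℕ) : ZMod N)).val : ℕ) := Int.ModEq.dvd h1
    have h3 : (d : ℤ) ∣ (((k • ((d : ℕ) : ZMod N)).val : ℕ) : ℤ) := by
      have hdN : (d : ℤ) ∣ (N : ℤ) := Int.natCast_dvd_natCast.mpr hd
      have := dvd_sub (dvd_mul_left (d : ℤ) k) (hdN.trans h2)
      simpa using this
    exact_mod_cast h3
  · rintro ⟨c, hc⟩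
    refine ⟨(c : ℤ), ?_⟩
    show ((c : ℤ)) • ((d : ℕ) : ZMod N) = x
    rw [zsmul_eq_mul]
    conv_rhs => rw [← ZMod.natCast_zmod_val x, hc]
    push_cast
    ring

/-- Every additive subgroup of `ZMod (2^f)` is the multiples of a power of two. -/
lemma addsubgroup_classify {N f : ℕ} (hN : N = 2 ^ f) (M : AddSubgroup (ZMod N)) :
    ∃ m ≤ f, M = AddSubgroup.zmultiples ((2 ^ m : ℕ) : ZMod N) := by
  have hNpos : 0 < N := by rw [hN]; positivity
  haveI : NeZero N := ⟨hNpos.ne'⟩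
  have hdvd : Nat.card M ∣ 2 ^ f := by
    have h := card_addSubgroup_dvd_card M
    rw [Nat.card_zmod] at h
    rwa [← hN]
  obtain ⟨t, ht, hcard⟩ := (Nat.dvd_prime_pow Nat.prime_two).mp hdvd
  refine ⟨f - t, Nat.sub_le f t, ?_⟩
  have hdvdN : (2 : ℕ) ^ (f - t) ∣ N := by
    rw [hN]; exact pow_dvd_pow 2 (Nat.sub_le f t)
  have hle : M ≤ AddSubgroup.zmultiples ((2 ^ (f - t) : ℕ) : ZMod N) := by
    intro x hx
    rw [mem_zmultiples_natCast_iff hdvdN]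
    have h0 : (2 ^ t : ℕ) • x = 0 := by
      have h0' : (2 ^ t : ℕ) • (⟨x, hx⟩ : M) = 0 := by
        rw [← hcard]; exact card_nsmul_eq_zero'
      simpa using Subtype.ext_iff.mp h0'
    have h1 : ((2 ^ t * x.val : ℕ) : ZMod N) = 0 := by
      rw [Nat.cast_mul, ZMod.natCast_zmod_val, ← nsmul_eq_mul, h0]
    rw [ZMod.natCast_eq_zero_iff] at h1
    have h1' : (2 : ℕ) ^ f ∣ 2 ^ t * x.val := by rwa [← hN]
    obtain ⟨c, hc⟩ := h1'
    refine ⟨c, ?_⟩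
    have h2 : 2 ^ t * x.val = 2 ^ t * (2 ^ (f - t) * c) := by
      rw [hc, ← mul_assoc, ← pow_add]
      congr 2
      omega
    exact Nat.eq_of_mul_eq_mul_left (by positivity) h2
  have hcard2 : Nat.card (AddSubgroup.zmultiples ((2 ^ (f - t) : ℕ) : ZMod N)) = 2 ^ t := by
    rw [Nat.card_zmultiples, ZMod.addOrderOf_coe _ hNpos.ne', hN,
      Nat.gcd_eq_right (pow_dvd_pow 2 (Nat.sub_le f t)),
      Nat.pow_div (Nat.sub_le f t) (by norm_num)]
    congr 1
    omega
  exact AddSubgroup.eq_of_le_of_card_ge hle (by rw [hcard2, hcard])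

variable {n : ℕ}

/-- Multiples of `2^m` in `ZMod (2*n)`. -/
def D (n m : ℕ) : AddSubgroup (ZMod (2 * n)) :=
  AddSubgroup.zmultiples ((2 ^ m : ℕ) : ZMod (2 * n))

/-- The "cyclic" subgroups of the quaternion group. -/
def CC (n m : ℕ) : Subgroup (QuaternionGroup n) where
  carrier := {x | ∃ i ∈ D n m, x = QuaternionGroup.a i}
  one_mem' := ⟨0, zero_mem _, rfl⟩
  mul_mem' := by
    rintro x y ⟨i, hi, rfl⟩ ⟨j, hj, rfl⟩
    exact ⟨i + j, add_mem hi hj, rfl⟩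
  inv_mem' := by
    rintro x ⟨i, hi, rfl⟩
    exact ⟨-i, neg_mem hi, rfl⟩

/-- The non-"cyclic-in-a" subgroups of the quaternion group. -/
def HH (n m : ℕ) (j : ZMod (2 * n)) (hn : ((n : ℕ) : ZMod (2 * n)) ∈ D n m) :
    Subgroup (QuaternionGroup n) where
  carrier := {x | (∃ i ∈ D n m, x = QuaternionGroup.a i) ∨
    (∃ i, i - j ∈ D n m ∧ x = QuaternionGroup.xa i)}
  one_mem' := Or.inl ⟨0, zero_mem _, rfl⟩
  mul_mem' := by
    rintro x y (⟨i, hi, rfl⟩ | ⟨i, hi, rfl⟩) (⟨k, hk, rfl⟩ | ⟨k, hk, rfl⟩)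
    · exact Or.inl ⟨i + k, add_mem hi hk, rfl⟩
    · refine Or.inr ⟨k - i, ?_, rfl⟩
      have h : k - i - j = (k - j) - i := by ring
      rw [h]; exact sub_mem hk hi
    · refine Or.inr ⟨i + k, ?_, rfl⟩
      have h : i + k - j = (i - j) + k := by ring
      rw [h]; exact add_mem hi hk
    · refine Or.inl ⟨(n : ZMod (2 * n)) + k - i, ?_, rfl⟩
      have h : (n : ZMod (2 * n)) + k - i = (n : ZMod (2 * n)) + (k - j) - (i - j) := by ring
      rw [h]; exact sub_mem (add_mem hn hk) hi
  inv_mem' := by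
    rintro x (⟨i, hi, rfl⟩ | ⟨i, hi, rfl⟩)
    · exact Or.inl ⟨-i, neg_mem hi, rfl⟩
    · refine Or.inr ⟨(n : ZMod (2 * n)) + i, ?_, rfl⟩
      have h : (n : ZMod (2 * n)) + i - j = (n : ZMod (2 * n)) + (i - j) := by ring
      rw [h]; exact add_mem hn hi

lemma a_mem_CC_iff {m : ℕ} {i : ZMod (2 * n)} :
    QuaternionGroup.a i ∈ CC n m ↔ i ∈ D n m := by
  constructor
  · rintro ⟨i', hi', h⟩
    injection h with h'
    rw [h']; exact hi'
  · intro hi; exact ⟨i, hi, rfl⟩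

lemma xa_not_mem_CC {m : ℕ} {i : ZMod (2 * n)} :
    QuaternionGroup.xa i ∉ CC n m := by
  rintro ⟨i', _, h⟩
  cases h

lemma a_mem_HH_iff {m : ℕ} {j i : ZMod (2 * n)} {hn : ((n : ℕ) : ZMod (2 * n)) ∈ D n m} :
    QuaternionGroup.a i ∈ HH n m j hn ↔ i ∈ D n m := by
  constructor
  · rintro (⟨i', hi', h⟩ | ⟨i', _, h⟩)
    · injection h with h'; rw [h']; exact hi'
    · cases h
  · intro hi; exact Or.inl ⟨i, hi, rfl⟩

lemma xa_mem_HH_iff {m : ℕ} {j i : ZMod (2 * n)} {hn : ((n : ℕ) : ZMod (2 * n)) ∈ D n m} :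
    QuaternionGroup.xa i ∈ HH n m j hn ↔ i - j ∈ D n m := by
  constructor
  · rintro (⟨i', _, h⟩ | ⟨i', hi', h⟩)
    · cases h
    · injection h with h'; rw [h']; exact hi'
  · intro hi; exact Or.inr ⟨i, hi, rfl⟩

lemma D_injective {f m m' : ℕ} (hN : 2 * n = 2 ^ f) (hm : m ≤ f) (hm' : m' ≤ f)
    (h : D n m = D n m') : m = m' := by
  haveI : NeZero (2 * n) := ⟨by rw [hN]; positivity⟩
  by_contra hne
  -- wlog-type argument
  have key : ∀ a b : ℕ, a ≤ f → b ≤ f → a < b → D n a = D n b → False := by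
    intro a b ha hb hab hD
    have hlt : (2:ℕ) ^ a < 2 * n := by
      rw [hN]; exact Nat.pow_lt_pow_right one_lt_two (by omega)
    have hmem : ((2 ^ a : ℕ) : ZMod (2 * n)) ∈ D n a := by
      rw [D, mem_zmultiples_natCast_iff (by rw [hN]; exact pow_dvd_pow 2 ha),
        ZMod.val_cast_of_lt hlt]
    rw [hD, D, mem_zmultiples_natCast_iff (by rw [hN]; exact pow_dvd_pow 2 hb),
      ZMod.val_cast_of_lt hlt] at hmem
    have := (Nat.pow_dvd_pow_iff_le_right one_lt_two).mp hmem
    omega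
  rcases Nat.lt_or_ge m m' with hlt | hge
  · exact key m m' hm hm' hlt h
  · exact key m' m hm' hm (by omega) h.symm

lemma fin_eq_of_sub_mem_D {f m : ℕ} (hN : 2 * n = 2 ^ f) (hm : m ≤ f)
    {jv jv' : ℕ} (hjv : jv < 2 ^ m) (hjv' : jv' < 2 ^ m)
    (h : ((jv' : ℕ) : ZMod (2 * n)) - ((jv : ℕ) : ZMod (2 * n)) ∈ D n m) : jv' = jv := by
  haveI : NeZero (2 * n) := ⟨by rw [hN]; positivity⟩
  rw [D, mem_zmultiples_natCast_iff (by rw [hN]; exact pow_dvd_pow 2 hm)] at h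
  set x := ((jv' : ℕ) : ZMod (2 * n)) - ((jv : ℕ) : ZMod (2 * n)) with hx
  have h1 : ((jv' : ℕ) : ZMod (2 * n)) = ((jv + x.val : ℕ) : ZMod (2 * n)) := by
    push_cast [ZMod.natCast_zmod_val]
    rw [hx]; ring
  rw [ZMod.natCast_eq_natCast_iff] at h1
  have h2 : jv' ≡ jv + x.val [MOD 2 ^ m] :=
    h1.of_dvd (by rw [hN]; exact pow_dvd_pow 2 hm)
  have h3 : jv' ≡ jv [MOD 2 ^ m] := by
    have h' : x.val ≡ 0 [MOD 2 ^ m] := (Nat.modEq_zero_iff_dvd).mpr h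
    have := h2.trans ((Nat.ModEq.add_left jv h').trans (by rw [Nat.add_zero]))
    exact this
  have h4 : jv' % 2 ^ m = jv % 2 ^ m := h3
  rwa [Nat.mod_eq_of_lt hjv', Nat.mod_eq_of_lt hjv] at h4

/-- The subgroup of "rotations" in a subgroup `H`. -/
def MSub (H : Subgroup (QuaternionGroup n)) : AddSubgroup (ZMod (2 * n)) where
  carrier := {i | QuaternionGroup.a i ∈ H}
  zero_mem' := H.one_mem
  add_mem' := by
    intro i j hi hj
    have := H.mul_mem hi hj
    rwa [a_mul_a] at this
  neg_mem' := by
    intro i hi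
    have := H.inv_mem hi
    rwa [show (QuaternionGroup.a i)⁻¹ = QuaternionGroup.a (-i) from rfl] at this

lemma n_mem_D {m : ℕ} (h : (2 : ℕ) ^ m ∣ n) : ((n : ℕ) : ZMod (2 * n)) ∈ D n m := by
  obtain ⟨c, hc⟩ := h
  refine ⟨(c : ℤ), ?_⟩
  show ((c : ℤ)) • ((2 ^ m : ℕ) : ZMod (2 * n)) = ((n : ℕ) : ZMod (2 * n))
  rw [zsmul_eq_mul]
  push_cast [hc]
  ring

/-- Classification of subgroups of the generalized quaternion group. -/
lemma classify {f : ℕ} (hN : 2 * n = 2 ^ f) (hn : n ≠ 0) (H : Subgroup (QuaternionGroup n)) :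
    (∃ m ≤ f, H = CC n m) ∨
    (∃ m, ∃ (h : (2 : ℕ) ^ m ∣ n), ∃ jv < 2 ^ m,
      H = HH n m ((jv : ℕ) : ZMod (2 * n)) (n_mem_D h)) := by
  haveI : NeZero (2 * n) := ⟨by rw [hN]; positivity⟩
  obtain ⟨m, hm, hM⟩ := addsubgroup_classify hN (MSub H)
  have hDm : MSub H = D n m := hM
  by_cases hxa : ∀ i : ZMod (2 * n), QuaternionGroup.xa i ∉ H
  · left
    refine ⟨m, hm, ?_⟩
    ext x
    cases x with
    | a i =>
      rw [a_mem_CC_iff]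
      rw [← hDm]
      exact Iff.rfl
    | xa i =>
      simp only [hxa i, false_iff]
      exact xa_not_mem_CC
  · right
    push_neg at hxa
    obtain ⟨j0, hj0⟩ := hxa
    have han : QuaternionGroup.a ((n : ℕ) : ZMod (2 * n)) ∈ H := by
      have := H.pow_mem hj0 2
      rwa [xa_sq] at this
    have hnD : ((n : ℕ) : ZMod (2 * n)) ∈ D n m := by rw [← hDm]; exact han
    have hdvd : (2 : ℕ) ^ m ∣ n := by
      rw [D, mem_zmultiples_natCast_iff (by rw [hN]; exact pow_dvd_pow 2 hm)] at hnD
      rwa [ZMod.val_cast_of_lt (by omega)] at hnD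
    obtain ⟨q, r, hqr, hr⟩ : ∃ q r, 2 ^ m * q + r = j0.val ∧ r < 2 ^ m :=
      ⟨_, _, Nat.div_add_mod _ _, Nat.mod_lt _ (by positivity)⟩
    refine ⟨m, hdvd, r, hr, ?_⟩
    -- key computation: xa i ∈ H ↔ j0 - i ∈ MSub H
    have hxa_iff : ∀ i : ZMod (2 * n), QuaternionGroup.xa i ∈ H ↔ j0 - i ∈ MSub H := by
      intro i
      constructor
      · intro hxi
        have hmul := H.mul_mem hxi (H.inv_mem hj0)
        have heq : QuaternionGroup.xa i * (QuaternionGroup.xa j0)⁻¹ =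
            QuaternionGroup.a (j0 - i) := by
          show QuaternionGroup.xa i * QuaternionGroup.xa ((n : ZMod (2 * n)) + j0) = _
          rw [xa_mul_xa]
          congr 1
          have h2 : ((n : ZMod (2 * n)) + (n : ZMod (2 * n))) = 0 := by
            rw [← Nat.cast_add, show n + n = 2 * n by ring, ZMod.natCast_self]
          calc (n : ZMod (2 * n)) + ((n : ZMod (2 * n)) + j0) - i
              = ((n : ZMod (2 * n)) + (n : ZMod (2 * n))) + j0 - i := by ring
            _ = j0 - i := by rw [h2]; ring
        rwa [heq] at hmul
      · intro hai
        have hmul := H.mul_mem (hai : QuaternionGroup.a (j0 - i) ∈ H) hj0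
        rwa [a_mul_xa, sub_sub_cancel] at hmul
    -- j0 is congruent to its reduction
    have hj0red : j0 - ((r : ℕ) : ZMod (2 * n)) ∈ D n m := by
      have key : j0 - ((r : ℕ) : ZMod (2 * n)) = ((2 ^ m * q : ℕ) : ZMod (2 * n)) := by
        rw [sub_eq_iff_eq_add, ← Nat.cast_add, hqr, ZMod.natCast_zmod_val]
      rw [key]
      refine ⟨((q : ℕ) : ℤ), ?_⟩
      show (((q : ℕ) : ℤ)) • ((2 ^ m : ℕ) : ZMod (2 * n)) = ((2 ^ m * q : ℕ) : ZMod (2 * n))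
      rw [zsmul_eq_mul, Int.cast_natCast, ← Nat.cast_mul, Nat.mul_comm q (2 ^ m)]
    ext x
    cases x with
    | a i =>
      rw [a_mem_HH_iff, ← hDm]
      exact Iff.rfl
    | xa i =>
      rw [xa_mem_HH_iff, hxa_iff i, hDm]
      constructor
      · intro h
        have h1 : i - j0 ∈ D n m := by
          have := neg_mem h
          rwa [neg_sub] at this
        have h2 := add_mem h1 hj0red
        have : i - j0 + (j0 - ((r : ℕ) : ZMod (2 * n)))
            = i - ((r : ℕ) : ZMod (2 * n)) := by ring
        rwa [this] at h2
      · intro h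
        have h2 := sub_mem h hj0red
        have : i - ((r : ℕ) : ZMod (2 * n))
            - (j0 - ((r : ℕ) : ZMod (2 * n))) = i - j0 := by ring
        rw [this] at h2
        have := neg_mem h2
        rwa [neg_sub] at this

lemma sum_two_pow (k : ℕ) : ∑ i ∈ Finset.range k, 2 ^ i = 2 ^ k - 1 := by
  induction k with
  | zero => simp
  | succ k ih =>
    rw [Finset.sum_range_succ, ih]
    have : 1 ≤ 2 ^ k := Nat.one_le_two_pow
    rw [pow_succ]
    omega

end QuatCount

open QuatCount QuaternionGroup in
theorem quaternion_subgroup_count (lam : ℕ) (hlam : 3 ≤ lam) :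
    Nat.card (Subgroup (QuaternionGroup (2 ^ (lam - 2)))) = 2 ^ (lam - 1) + lam - 1 := by
  obtain ⟨e, rfl⟩ : ∃ e, lam = e + 3 := ⟨lam - 3, by omega⟩
  show Nat.card (Subgroup (QuaternionGroup (2 ^ (e + 1)))) = 2 ^ (e + 2) + (e + 3) - 1
  set E := e + 1 with hE
  set n := 2 ^ E with hn
  have hN : 2 * n = 2 ^ (E + 1) := by rw [hn, pow_succ]; ring
  have hn0 : n ≠ 0 := by positivity
  -- the index type
  set X := (Fin (E + 2)) ⊕ (Σ m : Fin (E + 1), Fin (2 ^ (m : ℕ))) with hX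
  have hmemD : ∀ m : Fin (E + 1), (2 : ℕ) ^ (m : ℕ) ∣ n := by
    intro m
    rw [hn]
    exact pow_dvd_pow 2 (by omega)
  set F : X → Subgroup (QuaternionGroup n) :=
    Sum.elim (fun m => CC n (m : ℕ))
      (fun p => HH n (p.1 : ℕ) ((p.2 : ℕ) : ZMod (2 * n)) (n_mem_D (hmemD p.1)))
    with hF
  have hbij : Function.Bijective F := by
    constructor
    · rintro (m | ⟨m, j⟩) (m' | ⟨m', j'⟩) h <;> simp only [hF, Sum.elim_inl, Sum.elim_inr] at h
      · -- CC = CC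
        have hD : D n (m : ℕ) = D n (m' : ℕ) := by
          ext i
          rw [← a_mem_CC_iff, ← a_mem_CC_iff, h]
        have := D_injective hN (by omega) (by omega) hD
        congr 1
        exact Fin.ext this
      · -- CC = HH : impossible
        exfalso
        have : QuaternionGroup.xa ((j' : ℕ) : ZMod (2 * n)) ∈
            HH n (m' : ℕ) ((j' : ℕ) : ZMod (2 * n)) (n_mem_D (hmemD m')) := by
          rw [xa_mem_HH_iff, sub_self]
          exact zero_mem _
        rw [← h] at this
        exact xa_not_mem_CC this
      · exfalso
        have : QuaternionGroup.xa ((j : ℕ) : ZMod (2 * n)) ∈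
            HH n (m : ℕ) ((j : ℕ) : ZMod (2 * n)) (n_mem_D (hmemD m)) := by
          rw [xa_mem_HH_iff, sub_self]
          exact zero_mem _
        rw [h] at this
        exact xa_not_mem_CC this
      · -- HH = HH
        have hD : D n (m : ℕ) = D n (m' : ℕ) := by
          ext i
          rw [← @a_mem_HH_iff n (m : ℕ) _ i (n_mem_D (hmemD m)),
            ← @a_mem_HH_iff n (m' : ℕ) _ i (n_mem_D (hmemD m')), h]
        have hmm : (m : ℕ) = (m' : ℕ) := D_injective hN (by omega) (by omega) hD
        have hm : m = m' := Fin.ext hmm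
        subst hm
        have hjmem : QuaternionGroup.xa ((j' : ℕ) : ZMod (2 * n)) ∈
            HH n (m : ℕ) ((j' : ℕ) : ZMod (2 * n)) (n_mem_D (hmemD m)) := by
          rw [xa_mem_HH_iff, sub_self]
          exact zero_mem _
        rw [← h] at hjmem
        rw [xa_mem_HH_iff] at hjmem
        have hj : j' = j := Fin.ext
          (fin_eq_of_sub_mem_D hN (show (m : ℕ) ≤ E + 1 by omega) j.isLt j'.isLt hjmem)
        rw [hj]
    · intro H
      rcases classify hN hn0 H with ⟨m, hm, rfl⟩ | ⟨m, hdvd, jv, hjv, rfl⟩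
      · exact ⟨Sum.inl ⟨m, by omega⟩, rfl⟩
      · have hmE : m ≤ E := by
          have := (Nat.pow_dvd_pow_iff_le_right one_lt_two).mp (hn ▸ hdvd)
          omega
        exact ⟨Sum.inr ⟨⟨m, by omega⟩, ⟨jv, hjv⟩⟩, rfl⟩
  have hcard : Nat.card (Subgroup (QuaternionGroup n)) = Nat.card X :=
    (Nat.card_eq_of_bijective F hbij).symm
  have hcardX : Nat.card X = (E + 2) + (2 ^ (E + 1) - 1) := by
    rw [hX, Nat.card_eq_fintype_card, Fintype.card_sum, Fintype.card_sigma, Fintype.card_fin]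
    congr 1
    have : ∑ m : Fin (E + 1), Fintype.card (Fin (2 ^ (m : ℕ)))
        = ∑ i ∈ Finset.range (E + 1), 2 ^ i := by
      rw [← Fin.sum_univ_eq_sum_range]
      simp
    rw [this, sum_two_pow]
  rw [hcard, hcardX]
  have hp : (2:ℕ) ^ (E + 1) = 2 ^ (e + 2) := by rw [hE]
  rw [hp]
  have h1 : 1 ≤ (2:ℕ) ^ (e + 2) := Nat.one_le_two_pow
  obtain ⟨P, hP⟩ : ∃ P, (2:ℕ) ^ (e + 2) = P := ⟨_, rfl⟩
  rw [hP] at h1 ⊢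
  omega
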